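/- Let p be a prime with p ≡ 7 (mod 8). Then there are no positive integers x, y, z with x² + y² + z⁴ = p². -/

import Mathlib

/-- A natural number ≡ 3 mod 4 has a prime factor ≡ 3 mod 4 with odd multiplicity. -/
lemma exists_odd_val_of_three_mod_four {m : ℕ} (hm : m % 4 = 3) :
    ∃ q : ℕ, q.Prime ∧ q % 4 = 3 ∧ Odd (padicValNat q m) := by
  by_contra h
  push_neg at h
  have hiff : ∃ u v : ℕ, m = u ^ 2 + v ^ 2 := by
    rw [Nat.eq_sq_add_sq_iff]
    intro q hq hq3
    rcases Nat.even_or_odd (padicValNat q m) with he | ho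
    · exact he
    · exact absurd ho (h q (Nat.prime_of_mem_primeFactors hq) hq3)
  obtain ⟨u, v, huv⟩ := hiff
  have h4 : ∀ a b : ZMod 4, a ^ 2 + b ^ 2 ≠ 3 := by decide
  have hcast : (m : ZMod 4) = 3 := by rw [← ZMod.natCast_mod, hm]; rfl
  exact absurd hcast (by rw [huv]; push_cast; exact h4 u v)

theorem no_rep_k4 (p : ℕ) (hp : p.Prime) (hp7 : p % 8 = 7) :
    ¬ ∃ x y z : ℕ, 0 < x ∧ 0 < y ∧ 0 < z ∧ x ^ 2 + y ^ 2 + z ^ 4 = p ^ 2 := by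
  rintro ⟨x, y, z, hx, hy, hz, hsum⟩
  have hzp : z ^ 2 < p := by nlinarith
  set a := p - z ^ 2 with ha_def
  have ha : a + z ^ 2 = p := Nat.sub_add_cancel hzp.le
  set b := p + z ^ 2 with hb_def
  have ha0 : 0 < a := by omega
  have hb0 : 0 < b := by positivity
  have hn : x ^ 2 + y ^ 2 = a * b := by
    have hb' : b = a + z ^ 2 + z ^ 2 := by omega
    have h1 : a * b + z ^ 4 = p ^ 2 := by rw [hb', ← ha]; ring
    omega
  have key : ∃ q : ℕ, q.Prime ∧ q % 4 = 3 ∧ Odd (padicValNat q a) := by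
    rcases Nat.even_or_odd z with ⟨t, rfl⟩ | ⟨t, rfl⟩
    · have hz2 : (t + t) ^ 2 = 4 * (t * t) := by ring
      have ha4 : a % 4 = 3 := by omega
      exact exists_odd_val_of_three_mod_four ha4
    · have hz2 : (2 * t + 1) ^ 2 = 4 * (t * t + t) + 1 := by ring
      obtain ⟨u, hu⟩ := Nat.even_mul_succ_self t
      have htt : t * t + t = u + u := by nlinarith
      have ha8 : a % 8 = 6 := by omega
      set m := a / 2 with hm_def
      have ham : a = 2 * m := by omega
      have hm4 : m % 4 = 3 := by omega
      obtain ⟨q, hq, hq3, hqodd⟩ := exists_odd_val_of_three_mod_four hm4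
      refine ⟨q, hq, hq3, ?_⟩
      haveI : Fact q.Prime := ⟨hq⟩
      have hq2 : ¬ q ∣ 2 := by
        intro hdvd
        have := Nat.le_of_dvd (by norm_num) hdvd
        interval_cases q <;> omega
      rw [ham, padicValNat.mul (by norm_num) (by omega),
        padicValNat.eq_zero_of_not_dvd hq2, zero_add]
      exact hqodd
  obtain ⟨q, hq, hq3, hqodd⟩ := key
  haveI : Fact q.Prime := ⟨hq⟩
  have hqa : q ∣ a := by
    by_contra hnd
    rw [padicValNat.eq_zero_of_not_dvd hnd] at hqodd
    simp [Nat.odd_iff] at hqodd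
  have hqb : ¬ q ∣ b := by
    intro hdvd
    have h2p : q ∣ 2 * p := by
      have hab : a + b = 2 * p := by omega
      exact hab ▸ Nat.dvd_add hqa hdvd
    rcases (Nat.Prime.dvd_mul hq).mp h2p with h2 | hqp
    · have := Nat.le_of_dvd (by norm_num) h2
      interval_cases q <;> omega
    · have hqep : q = p := (Nat.prime_dvd_prime_iff_eq hq hp).mp hqp
      have := Nat.le_of_dvd ha0 hqa
      have hz2pos : 1 ≤ z ^ 2 := Nat.one_le_pow _ _ hz
      omega
  have heven : Even (padicValNat q (x ^ 2 + y ^ 2)) :=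
    Nat.eq_sq_add_sq_iff.mp ⟨x, y, rfl⟩ q (Nat.mem_primeFactors.mpr ⟨hq, by rw [hn]; exact dvd_mul_of_dvd_left hqa b, by positivity⟩) hq3
  rw [hn, padicValNat.mul ha0.ne' hb0.ne',
    padicValNat.eq_zero_of_not_dvd hqb, add_zero] at heven
  exact (Nat.not_even_iff_odd.mpr hqodd) heven
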